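/- arXiv:2006.12923 — 6 statements merged into one kernel-verified Lean document; each statement's English description precedes it below -/
import Mathlib

section
/- In the algebra D(b_•, c_•), the following additional relations hold: η²γ = 0, βη² = 0, μ²σ = 0, and γμ² = 0. -/
/- The 36-dimensional algebra D(b_•, c_•) on the quiver Δ with vertices
   1,2,3, loops α at 1, η at 2, μ at 3, and arrows β : 1 → 2, γ : 2 → 3,
   σ : 3 → 1. -/

namespace SocleWSA4

variable (K : Type) [Field K]

/-- Generators: 0 = e₁, 1 = e₂, 2 = e₃, 3 = α, 4 = β, 5 = η, 6 = γ,
7 = μ, 8 = σ. -/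
noncomputable def e1 : FreeAlgebra K (Fin 9) := FreeAlgebra.ι K 0
noncomputable def e2 : FreeAlgebra K (Fin 9) := FreeAlgebra.ι K 1
noncomputable def e3 : FreeAlgebra K (Fin 9) := FreeAlgebra.ι K 2
noncomputable def al : FreeAlgebra K (Fin 9) := FreeAlgebra.ι K 3
noncomputable def be : FreeAlgebra K (Fin 9) := FreeAlgebra.ι K 4
noncomputable def et : FreeAlgebra K (Fin 9) := FreeAlgebra.ι K 5
noncomputable def ga : FreeAlgebra K (Fin 9) := FreeAlgebra.ι K 6
noncomputable def mu : FreeAlgebra K (Fin 9) := FreeAlgebra.ι K 7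
noncomputable def si : FreeAlgebra K (Fin 9) := FreeAlgebra.ι K 8

/-- The defining relations of `D(b_•, c_•)`, where `b i` (resp. `c i`) is the
value `b_{i+1}` (resp. `c_{i+1}`) for `i : Fin 3`.  The relations include the
path-algebra (idempotent and source/target) relations. -/
inductive DRel (b c : Fin 3 → K) : FreeAlgebra K (Fin 9) → FreeAlgebra K (Fin 9) → Prop
  | unit : DRel b c (e1 K + e2 K + e3 K) 1
  | idem1 : DRel b c (e1 K * e1 K) (e1 K)
  | idem2 : DRel b c (e2 K * e2 K) (e2 K)
  | idem3 : DRel b c (e3 K * e3 K) (e3 K)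
  | orth12 : DRel b c (e1 K * e2 K) 0
  | orth21 : DRel b c (e2 K * e1 K) 0
  | orth13 : DRel b c (e1 K * e3 K) 0
  | orth31 : DRel b c (e3 K * e1 K) 0
  | orth23 : DRel b c (e2 K * e3 K) 0
  | orth32 : DRel b c (e3 K * e2 K) 0
  | sal : DRel b c (e1 K * al K) (al K)
  | tal : DRel b c (al K * e1 K) (al K)
  | sbe : DRel b c (e1 K * be K) (be K)
  | tbe : DRel b c (be K * e2 K) (be K)
  | set : DRel b c (e2 K * et K) (et K)
  | tet : DRel b c (et K * e2 K) (et K)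
  | sga : DRel b c (e2 K * ga K) (ga K)
  | tga : DRel b c (ga K * e3 K) (ga K)
  | smu : DRel b c (e3 K * mu K) (mu K)
  | tmu : DRel b c (mu K * e3 K) (mu K)
  | ssi : DRel b c (e3 K * si K) (si K)
  | tsi : DRel b c (si K * e1 K) (si K)
  | r1 : DRel b c (be K * ga K) (c 0 • (al K * be K * et K * ga K * mu K))
  | r2 : DRel b c (al K * be K * et K * ga K * mu K * si K)
                  (be K * et K * ga K * mu K * si K * al K)
  | r3 : DRel b c (al K * al K)
      (c 0 • (be K * et K * ga K * mu K * si K)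
        + b 0 • (be K * et K * ga K * mu K * si K * al K))
  | r4 : DRel b c (be K * ga K * mu K) 0
  | r5 : DRel b c (mu K * si K * be K) 0
  | r6 : DRel b c (ga K * si K * al K) 0
  | r7 : DRel b c (ga K * si K) (c 1 • (et K * ga K * mu K * si K * al K))
  | r8 : DRel b c (et K * ga K * mu K * si K * al K * be K)
                  (ga K * mu K * si K * al K * be K * et K)
  | r9 : DRel b c (et K * et K)
      (c 1 • (ga K * mu K * si K * al K * be K)
        + b 1 • (ga K * mu K * si K * al K * be K * et K))
  | r10 : DRel b c (al K * be K * ga K) 0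
  | r11 : DRel b c (si K * be K * et K) 0
  | r12 : DRel b c (et K * ga K * si K) 0
  | r13 : DRel b c (si K * be K) (c 2 • (mu K * si K * al K * be K * et K * ga K))
  | r14 : DRel b c (mu K * si K * al K * be K * et K * ga K)
                   (si K * al K * be K * et K * ga K * mu K)
  | r15 : DRel b c (mu K * mu K)
      (c 2 • (si K * al K * be K * et K * ga K)
        + b 2 • (si K * al K * be K * et K * ga K * mu K))
  | r16 : DRel b c (al K * al K * be K) 0
  | r17 : DRel b c (si K * al K * al K) 0

/-- The canonical projection onto `D(b_•, c_•)`. -/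
noncomputable def pi (b c : Fin 3 → K) :
    FreeAlgebra K (Fin 9) →ₐ[K] RingQuot (DRel K b c) :=
  RingQuot.mkAlgHom K (DRel K b c)

end SocleWSA4

open SocleWSA4 in
/-- In the algebra `D(b_•, c_•)` the additional relations
`η²γ = 0`, `βη² = 0`, `μ²σ = 0` and `γμ² = 0` hold. -/
theorem socle_wsa_stmt4 (K : Type) [Field K] (b c : Fin 3 → K) :
    pi K b c (et K * et K * ga K) = 0 ∧
    pi K b c (be K * (et K * et K)) = 0 ∧
    pi K b c (mu K * mu K * si K) = 0 ∧
    pi K b c (ga K * (mu K * mu K)) = 0 := by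

  have key : ∀ x y, DRel K b c x y → pi K b c x = pi K b c y :=
    fun _ _ h => RingQuot.mkAlgHom_rel K h
  have h9 := key _ _ (DRel.r9 (b := b) (c := c))
  have h10 := key _ _ (DRel.r10 (b := b) (c := c))
  have h8 := key _ _ (DRel.r8 (b := b) (c := c))
  have h4 := key _ _ (DRel.r4 (b := b) (c := c))
  have h12 := key _ _ (DRel.r12 (b := b) (c := c))
  have h14 := key _ _ (DRel.r14 (b := b) (c := c))
  have h15 := key _ _ (DRel.r15 (b := b) (c := c))
  have h6 := key _ _ (DRel.r6 (b := b) (c := c))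
  simp only [map_mul, map_add, map_smul, map_zero] at h9 h10 h8 h4 h12 h14 h15 h6 ⊢
  set A := pi K b c (al K)
  set B := pi K b c (be K)
  set E := pi K b c (et K)
  set G := pi K b c (ga K)
  set M := pi K b c (mu K)
  set S := pi K b c (si K)
  refine ⟨?_, ?_, ?_, ?_⟩
  · have e1 : G * M * S * A * B * G = 0 := by
      have : G * M * S * A * B * G = G * M * S * (A * B * G) := by noncomm_ring
      rw [this, h10, mul_zero]
    have e2 : G * M * S * A * B * E * G = 0 := by
      have : G * M * S * A * B * E * G = (G * M * S * A * B * E) * G := by noncomm_ring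
      rw [this, ← h8]
      have : E * G * M * S * A * B * G = E * (G * M * S * A * B * G) := by noncomm_ring
      rw [this, e1, mul_zero]
    rw [h9, add_mul, smul_mul_assoc, smul_mul_assoc]
    rw [show G * M * S * A * B * G = 0 from e1, show G * M * S * A * B * E * G = 0 from e2]
    simp
  · rw [h9, mul_add, mul_smul_comm, mul_smul_comm]
    have e1 : B * (G * M * S * A * B) = (B * G * M) * (S * A * B) := by noncomm_ring
    have e2 : B * (G * M * S * A * B * E) = (B * G * M) * (S * A * B * E) := by noncomm_ring
    rw [e1, e2, h4, zero_mul, zero_mul]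
    simp
  · have e1 : S * A * B * E * G * S = 0 := by
      have : S * A * B * E * G * S = S * A * B * (E * G * S) := by noncomm_ring
      rw [this, h12, mul_zero]
    have e2 : S * A * B * E * G * M * S = 0 := by
      have h14' : S * A * B * E * G * M = M * S * A * B * E * G := h14.symm
      have : S * A * B * E * G * M * S = (S * A * B * E * G * M) * S := rfl
      rw [this, h14']
      have : M * S * A * B * E * G * S = M * S * A * B * (E * G * S) := by noncomm_ring
      rw [this, h12, mul_zero]
    rw [h15, add_mul, smul_mul_assoc, smul_mul_assoc, e1, e2]
    simp
  · rw [h15, mul_add, mul_smul_comm, mul_smul_comm]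
    have e1 : G * (S * A * B * E * G) = (G * S * A) * (B * E * G) := by noncomm_ring
    have e2 : G * (S * A * B * E * G * M) = (G * S * A) * (B * E * G * M) := by noncomm_ring
    rw [e1, e2, h6, zero_mul, zero_mul]
    simp
end

section
/- In the algebra Q(2A)^k(b), the relations γα² = 0 and α³ = (βγα)^k = (αβγ)^k hold. -/
/- The algebra Q(2A)^k(b): quiver with vertices 1,2, loop α at 1,
   arrows β : 1 → 2, γ : 2 → 1, with relations
   α² = (βγα)^{k−1}βγ + b(βγα)^k, βγβ = (αβγ)^{k−1}αβ,
   γβγ = (γαβ)^{k−1}γα, α²β = 0. -/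

namespace SocleWSA5

variable (K : Type) [Field K]

/-- Generators: 0 = e₁, 1 = e₂, 2 = α, 3 = β, 4 = γ. -/
noncomputable def e1 : FreeAlgebra K (Fin 5) := FreeAlgebra.ι K 0
noncomputable def e2 : FreeAlgebra K (Fin 5) := FreeAlgebra.ι K 1
noncomputable def al : FreeAlgebra K (Fin 5) := FreeAlgebra.ι K 2
noncomputable def be : FreeAlgebra K (Fin 5) := FreeAlgebra.ι K 3
noncomputable def ga : FreeAlgebra K (Fin 5) := FreeAlgebra.ι K 4

inductive QARel (k : ℕ) (b : K) : FreeAlgebra K (Fin 5) → FreeAlgebra K (Fin 5) → Prop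
  | unit : QARel k b (e1 K + e2 K) 1
  | idem1 : QARel k b (e1 K * e1 K) (e1 K)
  | idem2 : QARel k b (e2 K * e2 K) (e2 K)
  | orth12 : QARel k b (e1 K * e2 K) 0
  | orth21 : QARel k b (e2 K * e1 K) 0
  | sal : QARel k b (e1 K * al K) (al K)
  | tal : QARel k b (al K * e1 K) (al K)
  | sbe : QARel k b (e1 K * be K) (be K)
  | tbe : QARel k b (be K * e2 K) (be K)
  | sga : QARel k b (e2 K * ga K) (ga K)
  | tga : QARel k b (ga K * e1 K) (ga K)
  | r1 : QARel k b (al K * al K)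
      ((be K * ga K * al K) ^ (k - 1) * (be K * ga K) + b • (be K * ga K * al K) ^ k)
  | r2 : QARel k b (be K * ga K * be K) ((al K * be K * ga K) ^ (k - 1) * (al K * be K))
  | r3 : QARel k b (ga K * be K * ga K) ((ga K * al K * be K) ^ (k - 1) * (ga K * al K))
  | r4 : QARel k b (al K * al K * be K) 0

/-- The canonical projection onto `Q(2A)^k(b)`. -/
noncomputable def pi (k : ℕ) (b : K) :
    FreeAlgebra K (Fin 5) →ₐ[K] RingQuot (QARel K k b) :=
  RingQuot.mkAlgHom K (QARel K k b)

end SocleWSA5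


private lemma shift_aux {M : Type*} [Monoid M] (x y : M) (n : ℕ) :
    x * (y * x) ^ n = (x * y) ^ n * x := by
  induction n with
  | zero => simp
  | succ n ih =>
    rw [pow_succ, ← mul_assoc, ih, pow_succ]
    simp [mul_assoc]

private lemma main_ring {K R : Type*} [CommSemiring K] [Ring R] [Algebra K R]
    (A B G : R) (b : K) (m : ℕ)
    (h1 : A * A = (B * (G * A)) ^ (m + 1) * (B * G) + b • (B * (G * A)) ^ (m + 2))
    (h3 : G * (B * G) = (G * (A * B)) ^ (m + 1) * (G * A))
    (h4 : A * (A * B) = 0) :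
    G * (A * A) = 0 ∧ A * (A * A) = (B * (G * A)) ^ (m + 2) ∧
      A * (A * A) = (A * (B * G)) ^ (m + 2) := by
  have key1 : ∀ x : R, G * (A * (A * (B * x))) = 0 := by
    intro x
    have h : G * (A * (A * (B * x))) = G * ((A * (A * B)) * x) := by simp [mul_assoc]
    rw [h, h4, zero_mul, mul_zero]
  have sXB : ∀ n : ℕ, (B * (G * A)) ^ n * B = B * (G * (A * B)) ^ n := by
    intro n; simpa [mul_assoc] using (shift_aux B (G * A) n).symm
  have sZG : ∀ n : ℕ, (G * (A * B)) ^ n * G = G * (A * (B * G)) ^ n := by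
    intro n; simpa [mul_assoc] using (shift_aux G (A * B) n).symm
  have sAX : ∀ n : ℕ, (A * (B * G)) ^ n * A = A * (B * (G * A)) ^ n := by
    intro n; simpa [mul_assoc] using (shift_aux A (B * G) n).symm
  have L1 : G * ((B * (G * A)) ^ (m + 1) * (B * G)) = 0 := by
    calc G * ((B * (G * A)) ^ (m + 1) * (B * G))
        = (G * ((B * (G * A)) ^ (m + 1) * B)) * G := by simp [mul_assoc]
      _ = (G * (B * (G * (A * B)) ^ (m + 1))) * G := by rw [sXB]
      _ = (G * B) * ((G * (A * B)) ^ (m + 1) * G) := by simp [mul_assoc]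
      _ = (G * B) * (G * (A * (B * G)) ^ (m + 1)) := by rw [sZG]
      _ = (G * (B * G)) * (A * (B * G)) ^ (m + 1) := by simp [mul_assoc]
      _ = ((G * (A * B)) ^ (m + 1) * (G * A)) * (A * (B * G)) ^ (m + 1) := by rw [h3]
      _ = (G * (A * B)) ^ (m + 1) *
            (G * (A * (A * (B * (G * (A * (B * G)) ^ m))))) := by
          rw [pow_succ' (A * (B * G)) m]; simp [mul_assoc]
      _ = 0 := by rw [key1, mul_zero]
  have L2 : G * (B * (G * A)) ^ (m + 2) = 0 := by
    calc G * (B * (G * A)) ^ (m + 2)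
        = (G * ((B * (G * A)) ^ (m + 1) * (B * G))) * A := by
          rw [pow_succ (B * (G * A)) (m + 1)]; simp [mul_assoc]
      _ = 0 := by rw [L1, zero_mul]
  have c1 : G * (A * A) = 0 := by
    rw [h1, mul_add, L1, mul_smul_comm, L2, smul_zero, add_zero]
  have cXA : (B * (G * A)) ^ (m + 2) * A = 0 := by
    calc (B * (G * A)) ^ (m + 2) * A
        = (B * (G * A)) ^ (m + 1) * (B * (G * (A * A))) := by
          rw [pow_succ (B * (G * A)) (m + 1)]; simp [mul_assoc]
      _ = 0 := by rw [c1, mul_zero, mul_zero]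
  have c2 : A * (A * A) = (B * (G * A)) ^ (m + 2) := by
    calc A * (A * A)
        = ((B * (G * A)) ^ (m + 1) * (B * G) + b • (B * (G * A)) ^ (m + 2)) * A := by
          rw [← mul_assoc, h1]
      _ = (B * (G * A)) ^ (m + 1) * (B * (G * A)) +
            b • ((B * (G * A)) ^ (m + 2) * A) := by
          rw [add_mul, smul_mul_assoc]; simp [mul_assoc]
      _ = (B * (G * A)) ^ (m + 2) := by rw [cXA, smul_zero, add_zero, ← pow_succ]
  have c3pre : A * (B * (G * A)) ^ (m + 2) = 0 := by
    calc A * (B * (G * A)) ^ (m + 2)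
        = A * (A * (A * A)) := by rw [← c2]
      _ = (A * (A * A)) * A := by simp [mul_assoc]
      _ = (B * (G * A)) ^ (m + 2) * A := by rw [c2]
      _ = 0 := cXA
  have h1' : (B * (G * A)) ^ (m + 1) * (B * G) =
      A * A - b • (B * (G * A)) ^ (m + 2) := eq_sub_of_add_eq h1.symm
  have c3 : A * (A * A) = (A * (B * G)) ^ (m + 2) := by
    have : (A * (B * G)) ^ (m + 2) = A * (A * A) := by
      calc (A * (B * G)) ^ (m + 2)
          = (A * (B * G)) ^ (m + 1) * A * (B * G) := by
            rw [pow_succ (A * (B * G)) (m + 1)]; simp [mul_assoc]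
        _ = A * ((B * (G * A)) ^ (m + 1) * (B * G)) := by rw [sAX]; simp [mul_assoc]
        _ = A * (A * A) - b • (A * (B * (G * A)) ^ (m + 2)) := by
            rw [h1', mul_sub, mul_smul_comm]
        _ = A * (A * A) := by rw [c3pre, smul_zero, sub_zero]
    exact this.symm
  exact ⟨c1, c2, c3⟩

open SocleWSA5 in
/-- In `Q(2A)^k(b)` the relations `γα² = 0` and
`α³ = (βγα)^k = (αβγ)^k` hold. -/
theorem socle_wsa_stmt5 (K : Type) [Field K] (k : ℕ) (hk : 2 ≤ k) (b : K) :
    pi K k b (ga K * (al K * al K)) = 0 ∧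
    pi K k b (al K * al K * al K) = pi K k b ((be K * ga K * al K) ^ k) ∧
    pi K k b (al K * al K * al K) = pi K k b ((al K * be K * ga K) ^ k) := by
  obtain ⟨m, rfl⟩ : ∃ m, k = m + 2 := ⟨k - 2, by omega⟩
  have h1 := RingQuot.mkAlgHom_rel K (QARel.r1 (K := K) (k := m + 2) (b := b))
  have h3 := RingQuot.mkAlgHom_rel K (QARel.r3 (K := K) (k := m + 2) (b := b))
  have h4 := RingQuot.mkAlgHom_rel K (QARel.r4 (K := K) (k := m + 2) (b := b))
  simp only [show m + 2 - 1 = m + 1 from rfl, map_mul, map_add, map_pow, map_smul,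
    map_zero, mul_assoc] at h1 h3 h4
  obtain ⟨c1, c2, c3⟩ := main_ring (RingQuot.mkAlgHom K (QARel K (m + 2) b) (al K))
    (RingQuot.mkAlgHom K (QARel K (m + 2) b) (be K))
    (RingQuot.mkAlgHom K (QARel K (m + 2) b) (ga K)) b m h1 h3 h4
  refine ⟨?_, ?_, ?_⟩ <;>
    simp only [pi, map_mul, map_pow, mul_assoc] <;>
    [exact c1; exact c2; exact c3]
end

section
/- Let K be a field of characteristic 2, t ≥ 4 an even natural number, and b ∈ K. Then the map defined by α ↦ α, β ↦ β, γ ↦ γ + bγα, η ↦ η + bη² induces a K-algebra isomorphism Q(2B)_3^t(b) → Q(2B)_3^t(0). -/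
/- The algebra Q(2B)_3^t(a,b): quiver with vertices 1,2, loop α at 1, loop η
   at 2, arrows β : 1 → 2, γ : 2 → 1, with relations
   αβ = βη, ηγ = γα, α² = βγ + bα³, γβ = aη^{t−1}, α⁴ = 0, η^{t+1} = 0,
   γα² = 0, α²β = 0.  Q(2B)_3^t(b) := Q(2B)_3^t(1,b). -/

namespace SocleWSA8

variable (K : Type) [Field K]

/-- Generators: 0 = e₁, 1 = e₂, 2 = α, 3 = β, 4 = γ, 5 = η. -/
noncomputable def e1 : FreeAlgebra K (Fin 6) := FreeAlgebra.ι K 0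
noncomputable def e2 : FreeAlgebra K (Fin 6) := FreeAlgebra.ι K 1
noncomputable def al : FreeAlgebra K (Fin 6) := FreeAlgebra.ι K 2
noncomputable def be : FreeAlgebra K (Fin 6) := FreeAlgebra.ι K 3
noncomputable def ga : FreeAlgebra K (Fin 6) := FreeAlgebra.ι K 4
noncomputable def et : FreeAlgebra K (Fin 6) := FreeAlgebra.ι K 5

inductive QBRel (t : ℕ) (a b : K) : FreeAlgebra K (Fin 6) → FreeAlgebra K (Fin 6) → Prop
  | unit : QBRel t a b (e1 K + e2 K) 1
  | idem1 : QBRel t a b (e1 K * e1 K) (e1 K)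
  | idem2 : QBRel t a b (e2 K * e2 K) (e2 K)
  | orth12 : QBRel t a b (e1 K * e2 K) 0
  | orth21 : QBRel t a b (e2 K * e1 K) 0
  | sal : QBRel t a b (e1 K * al K) (al K)
  | tal : QBRel t a b (al K * e1 K) (al K)
  | sbe : QBRel t a b (e1 K * be K) (be K)
  | tbe : QBRel t a b (be K * e2 K) (be K)
  | sga : QBRel t a b (e2 K * ga K) (ga K)
  | tga : QBRel t a b (ga K * e1 K) (ga K)
  | set : QBRel t a b (e2 K * et K) (et K)
  | tet : QBRel t a b (et K * e2 K) (et K)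
  | r1 : QBRel t a b (al K * be K) (be K * et K)
  | r2 : QBRel t a b (et K * ga K) (ga K * al K)
  | r3 : QBRel t a b (al K * al K) (be K * ga K + b • al K ^ 3)
  | r4 : QBRel t a b (ga K * be K) (a • et K ^ (t - 1))
  | r5 : QBRel t a b (al K ^ 4) 0
  | r6 : QBRel t a b (et K ^ (t + 1)) 0
  | r7 : QBRel t a b (ga K * (al K * al K)) 0
  | r8 : QBRel t a b (al K * al K * be K) 0

/-- The canonical projection onto `Q(2B)_3^t(a,b)`. -/
noncomputable def pi (t : ℕ) (a b : K) :
    FreeAlgebra K (Fin 6) →ₐ[K] RingQuot (QBRel K t a b) :=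
  RingQuot.mkAlgHom K (QBRel K t a b)

end SocleWSA8

namespace SocleWSA8Aux
open SocleWSA8 Polynomial

variable {K : Type} [Field K]

lemma one_add_pow' {R : Type} [CommRing R] (z : R) (n : ℕ) :
    ∃ v, (1 + z) ^ n = 1 + (n : R) * z + z ^ 2 * v := by
  induction n with
  | zero => exact ⟨0, by simp⟩
  | succ n ih =>
    obtain ⟨v, hv⟩ := ih
    refine ⟨(n : R) + v + v * z, ?_⟩
    rw [pow_succ, hv]
    push_cast
    ring

lemma two_K (hchar : CharP K 2) : (2 : K) = 0 := by
  haveI := hchar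
  exact_mod_cast CharP.cast_eq_zero K 2

lemma poly2 (hchar : CharP K 2) (c : K) (s : ℕ) :
    (X + C c * X ^ (2 ^ s) : K[X]) + C c * (X + C c * X ^ (2 ^ s)) ^ (2 ^ s)
      = X + C (c ^ (2 ^ s) * c) * X ^ (2 ^ (s + s)) := by
  haveI := hchar
  haveI : Fact (Nat.Prime 2) := ⟨Nat.prime_two⟩
  have hadd : (X + C c * X ^ (2 ^ s) : K[X]) ^ (2 ^ s)
      = X ^ (2 ^ s) + (C c * X ^ (2 ^ s)) ^ (2 ^ s) := add_pow_char_pow _ _ 2 s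
  have h2 : (2 : K[X]) = 0 := by
    rw [← map_ofNat (C : K →+* K[X]) 2, two_K hchar, map_zero]
  rw [hadd, mul_pow, ← C_pow, ← pow_mul, map_mul,
    show 2 ^ s * 2 ^ s = 2 ^ (s + s) from (pow_add 2 s s).symm]
  linear_combination (C c * (X : K[X]) ^ (2 ^ s)) * h2

lemma poly4 (c : K) (n : ℕ) : ∃ u, (X + C c * X ^ 2 : K[X]) ^ n = X ^ n * u :=
  ⟨(1 + C c * X) ^ n, by
    rw [show (X + C c * X ^ 2 : K[X]) = X * (1 + C c * X) by ring, mul_pow]⟩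

lemma poly3 (hchar : CharP K 2) {t : ℕ} (ht : 4 ≤ t) (hev : Even t) (c : K) :
    ∃ u : K[X], (X + C c * X ^ 2) ^ (t - 1) = X ^ (t - 1) + C c * X ^ t + X ^ (t + 1) * u := by
  haveI := hchar
  have h2 : (2 : K) = 0 := two_K hchar
  have htK : ((t : ℕ) : K) = 0 := by
    obtain ⟨k, hk⟩ := hev
    rw [hk]; push_cast
    have : (k : K) + k = 2 * k := by ring
    rw [this, h2, zero_mul]
  have ht1 : ((t - 1 : ℕ) : K) = 1 := by
    rw [Nat.cast_sub (by omega), htK]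
    have : (1 : K) + 1 = 0 := by rw [one_add_one_eq_two, h2]
    simpa using neg_eq_of_add_eq_zero_left this
  have ht1' : ((t - 1 : ℕ) : K[X]) = 1 := by
    have : ((t - 1 : ℕ) : K[X]) = C ((t - 1 : ℕ) : K) := by simp
    rw [this, ht1, map_one]
  obtain ⟨v, hv⟩ := one_add_pow' (C c * X : K[X]) (t - 1)
  refine ⟨C c ^ 2 * v, ?_⟩
  have ha : (X : K[X]) ^ t = X ^ (t - 1) * X := by
    rw [← pow_succ, show t - 1 + 1 = t by omega]
  have hb : (X : K[X]) ^ (t + 1) = X ^ (t - 1) * X ^ 2 := by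
    rw [← pow_add, show t - 1 + 2 = t + 1 by omega]
  rw [show (X + C c * X ^ 2 : K[X]) = X * (1 + C c * X) by ring, mul_pow, hv, ht1', ha, hb]
  ring

lemma aeval_lin {R : Type} [Ring R] [Algebra K R] (x : R) (c : K) (m : ℕ) :
    aeval x ((X : K[X]) + C c * X ^ m) = x + c • x ^ m := by
  rw [map_add, map_mul, aeval_C, map_pow, aeval_X, Algebra.smul_def]

lemma step_id {R : Type} [Ring R] [Algebra K R] (hchar : CharP K 2) (x : R) (c : K) (s : ℕ) :
    (x + c • x ^ (2 ^ s)) + c • (x + c • x ^ (2 ^ s)) ^ (2 ^ s)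
      = x + (c ^ (2 ^ s) * c) • x ^ (2 ^ (s + s)) := by
  have h := congrArg (aeval x) (poly2 hchar c s)
  rwa [map_add, map_mul, aeval_C, map_pow, aeval_lin, aeval_lin, ← Algebra.smul_def] at h

variable (K)

/-- images of the generators -/
noncomputable def Fgen (t : ℕ) (d c : K) : Fin 6 → RingQuot (QBRel K t 1 d)
  | 0 => pi K t 1 d (e1 K)
  | 1 => pi K t 1 d (e2 K)
  | 2 => pi K t 1 d (al K)
  | 3 => pi K t 1 d (be K)
  | 4 => pi K t 1 d (ga K) + c • (pi K t 1 d (ga K) * pi K t 1 d (al K))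
  | 5 => pi K t 1 d (et K) + c • (pi K t 1 d (et K) * pi K t 1 d (et K))

noncomputable def Fmap (t : ℕ) (d c : K) :
    FreeAlgebra K (Fin 6) →ₐ[K] RingQuot (QBRel K t 1 d) :=
  FreeAlgebra.lift K (Fgen K t d c)

lemma Fmap_e1 (t : ℕ) (d c : K) : Fmap K t d c (e1 K) = pi K t 1 d (e1 K) :=
  FreeAlgebra.lift_ι_apply _ _
lemma Fmap_e2 (t : ℕ) (d c : K) : Fmap K t d c (e2 K) = pi K t 1 d (e2 K) :=
  FreeAlgebra.lift_ι_apply _ _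
lemma Fmap_al (t : ℕ) (d c : K) : Fmap K t d c (al K) = pi K t 1 d (al K) :=
  FreeAlgebra.lift_ι_apply _ _
lemma Fmap_be (t : ℕ) (d c : K) : Fmap K t d c (be K) = pi K t 1 d (be K) :=
  FreeAlgebra.lift_ι_apply _ _
lemma Fmap_ga (t : ℕ) (d c : K) :
    Fmap K t d c (ga K) = pi K t 1 d (ga K) + c • (pi K t 1 d (ga K) * pi K t 1 d (al K)) :=
  FreeAlgebra.lift_ι_apply _ _
lemma Fmap_et (t : ℕ) (d c : K) :
    Fmap K t d c (et K) = pi K t 1 d (et K) + c • (pi K t 1 d (et K) * pi K t 1 d (et K)) :=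
  FreeAlgebra.lift_ι_apply _ _

variable {K}

section Base
variable (t : ℕ) (d : K)

lemma qb {x y : FreeAlgebra K (Fin 6)} (h : QBRel K t 1 d x y) :
    pi K t 1 d x = pi K t 1 d y := RingQuot.mkAlgHom_rel K h

lemma bU : pi K t 1 d (e1 K) + pi K t 1 d (e2 K) = 1 := by
  simpa using qb t d QBRel.unit
lemma bI1 : pi K t 1 d (e1 K) * pi K t 1 d (e1 K) = pi K t 1 d (e1 K) := by
  simpa using qb t d QBRel.idem1
lemma bI2 : pi K t 1 d (e2 K) * pi K t 1 d (e2 K) = pi K t 1 d (e2 K) := by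
  simpa using qb t d QBRel.idem2
lemma bO12 : pi K t 1 d (e1 K) * pi K t 1 d (e2 K) = 0 := by
  simpa using qb t d QBRel.orth12
lemma bO21 : pi K t 1 d (e2 K) * pi K t 1 d (e1 K) = 0 := by
  simpa using qb t d QBRel.orth21
lemma bSal : pi K t 1 d (e1 K) * pi K t 1 d (al K) = pi K t 1 d (al K) := by
  simpa using qb t d QBRel.sal
lemma bTal : pi K t 1 d (al K) * pi K t 1 d (e1 K) = pi K t 1 d (al K) := by
  simpa using qb t d QBRel.tal
lemma bSbe : pi K t 1 d (e1 K) * pi K t 1 d (be K) = pi K t 1 d (be K) := by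
  simpa using qb t d QBRel.sbe
lemma bTbe : pi K t 1 d (be K) * pi K t 1 d (e2 K) = pi K t 1 d (be K) := by
  simpa using qb t d QBRel.tbe
lemma bSga : pi K t 1 d (e2 K) * pi K t 1 d (ga K) = pi K t 1 d (ga K) := by
  simpa using qb t d QBRel.sga
lemma bTga : pi K t 1 d (ga K) * pi K t 1 d (e1 K) = pi K t 1 d (ga K) := by
  simpa using qb t d QBRel.tga
lemma bSet : pi K t 1 d (e2 K) * pi K t 1 d (et K) = pi K t 1 d (et K) := by
  simpa using qb t d QBRel.set
lemma bTet : pi K t 1 d (et K) * pi K t 1 d (e2 K) = pi K t 1 d (et K) := by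
  simpa using qb t d QBRel.tet
lemma b1 : pi K t 1 d (al K) * pi K t 1 d (be K) = pi K t 1 d (be K) * pi K t 1 d (et K) := by
  simpa using qb t d QBRel.r1
lemma b2 : pi K t 1 d (et K) * pi K t 1 d (ga K) = pi K t 1 d (ga K) * pi K t 1 d (al K) := by
  simpa using qb t d QBRel.r2
lemma b3 : pi K t 1 d (al K) * pi K t 1 d (al K)
    = pi K t 1 d (be K) * pi K t 1 d (ga K) + d • pi K t 1 d (al K) ^ 3 := by
  simpa using qb t d QBRel.r3
lemma b4 : pi K t 1 d (ga K) * pi K t 1 d (be K) = pi K t 1 d (et K) ^ (t - 1) := by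
  simpa using qb t d QBRel.r4
lemma b5 : pi K t 1 d (al K) ^ 4 = 0 := by
  simpa using qb t d QBRel.r5
lemma b6 : pi K t 1 d (et K) ^ (t + 1) = 0 := by
  simpa using qb t d QBRel.r6
lemma b7 : pi K t 1 d (ga K) * (pi K t 1 d (al K) * pi K t 1 d (al K)) = 0 := by
  simpa using qb t d QBRel.r7
lemma b8 : pi K t 1 d (al K) * pi K t 1 d (al K) * pi K t 1 d (be K) = 0 := by
  simpa using qb t d QBRel.r8

lemma dQ2 (hchar : CharP K 2) (z : RingQuot (QBRel K t 1 d)) : z + z = 0 := by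
  rw [← two_smul K z, show (2 : K) = 0 from two_K hchar, zero_smul]

lemma dBE2 : pi K t 1 d (be K) * (pi K t 1 d (et K) * pi K t 1 d (et K)) = 0 := by
  rw [← mul_assoc, ← b1, mul_assoc, ← b1, ← mul_assoc, b8]

lemma dCAA : pi K t 1 d (ga K) * pi K t 1 d (al K) * pi K t 1 d (al K) = 0 := by
  rw [mul_assoc, b7]

lemma dCAB (ht : 4 ≤ t) :
    pi K t 1 d (ga K) * pi K t 1 d (al K) * pi K t 1 d (be K) = pi K t 1 d (et K) ^ t := by
  rw [mul_assoc, b1, ← mul_assoc, b4, ← pow_succ, show t - 1 + 1 = t by omega]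

lemma dECA : pi K t 1 d (et K) * (pi K t 1 d (ga K) * pi K t 1 d (al K)) = 0 := by
  rw [← mul_assoc, b2, mul_assoc, b7]

lemma dEEC : pi K t 1 d (et K) * pi K t 1 d (et K) * pi K t 1 d (ga K) = 0 := by
  rw [mul_assoc, b2, dECA]

lemma dEECA : pi K t 1 d (et K) * pi K t 1 d (et K)
    * (pi K t 1 d (ga K) * pi K t 1 d (al K)) = 0 := by
  rw [mul_assoc, dECA, mul_zero]

lemma dBC (hchar : CharP K 2) : pi K t 1 d (be K) * pi K t 1 d (ga K)
    = pi K t 1 d (al K) * pi K t 1 d (al K) + d • pi K t 1 d (al K) ^ 3 := by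
  rw [b3, add_assoc, dQ2 t d hchar, add_zero]

lemma dBCA (hchar : CharP K 2) :
    pi K t 1 d (be K) * (pi K t 1 d (ga K) * pi K t 1 d (al K)) = pi K t 1 d (al K) ^ 3 := by
  rw [← mul_assoc, dBC t d hchar, add_mul, smul_mul_assoc, ← pow_succ,
    show (3 : ℕ) + 1 = 4 from rfl, b5, smul_zero, add_zero, ← pow_two, ← pow_succ]

end Base

lemma rel_pres (hchar : CharP K 2) {t : ℕ} (ht : 4 ≤ t) (hev : Even t)
    (c d e : K) (he : e = d + c) :
    ∀ ⦃x y : FreeAlgebra K (Fin 6)⦄, QBRel K t 1 e x y → Fmap K t d c x = Fmap K t d c y := by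
  intro x y h
  cases h with
  | unit => rw [map_add, Fmap_e1, Fmap_e2, map_one, bU]
  | idem1 => rw [map_mul, Fmap_e1, bI1]
  | idem2 => rw [map_mul, Fmap_e2, bI2]
  | orth12 => rw [map_mul, Fmap_e1, Fmap_e2, map_zero, bO12]
  | orth21 => rw [map_mul, Fmap_e2, Fmap_e1, map_zero, bO21]
  | sal => rw [map_mul, Fmap_e1, Fmap_al, bSal]
  | tal => rw [map_mul, Fmap_al, Fmap_e1, bTal]
  | sbe => rw [map_mul, Fmap_e1, Fmap_be, bSbe]
  | tbe => rw [map_mul, Fmap_be, Fmap_e2, bTbe]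
  | sga => rw [map_mul, Fmap_e2, Fmap_ga, mul_add, mul_smul_comm, ← mul_assoc, bSga]
  | tga => rw [map_mul, Fmap_ga, Fmap_e1, add_mul, smul_mul_assoc, mul_assoc, bTal, bTga]
  | set => rw [map_mul, Fmap_e2, Fmap_et, mul_add, mul_smul_comm, ← mul_assoc, bSet]
  | tet => rw [map_mul, Fmap_et, Fmap_e2, add_mul, smul_mul_assoc, mul_assoc, bTet]
  | r1 =>
    rw [map_mul, map_mul, Fmap_al, Fmap_be, Fmap_et, mul_add, mul_smul_comm, dBE2,
      smul_zero, add_zero, b1]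
  | r2 =>
    simp only [map_mul, Fmap_et, Fmap_ga, Fmap_al, add_mul, mul_add, smul_mul_assoc,
      mul_smul_comm, smul_smul]
    rw [b2, dECA, dEEC, dEECA, dCAA]
    simp only [smul_zero, add_zero]
  | r3 =>
    simp only [map_mul, map_add, map_smul, map_pow, Fmap_al, Fmap_be, Fmap_ga, mul_add,
      mul_smul_comm]
    rw [dBCA t d hchar, dBC t d hchar, he, add_smul]
    conv_rhs => rw [add_assoc, add_assoc]
    have hz : d • pi K t 1 d (al K) ^ 3 + (c • pi K t 1 d (al K) ^ 3
        + (d • pi K t 1 d (al K) ^ 3 + c • pi K t 1 d (al K) ^ 3)) = 0 := by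
      rw [← add_assoc, add_add_add_comm, dQ2 t d hchar, dQ2 t d hchar, add_zero]
    rw [hz, add_zero]
  | r4 =>
    simp only [map_mul, map_smul, map_pow, one_smul, Fmap_ga, Fmap_be, Fmap_et]
    rw [add_mul, smul_mul_assoc, b4, dCAB t d ht]
    have hE2 : pi K t 1 d (et K) + c • (pi K t 1 d (et K) * pi K t 1 d (et K))
        = aeval (pi K t 1 d (et K)) ((X : K[X]) + C c * X ^ 2) := by
      rw [aeval_lin, pow_two]
    rw [hE2, ← map_pow (aeval (pi K t 1 d (et K)))]
    obtain ⟨u, hu⟩ := poly3 hchar ht hev c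
    rw [hu, map_add, map_add, map_mul, map_mul, map_pow, map_pow, map_pow, aeval_X,
      aeval_C, b6, zero_mul, add_zero, ← Algebra.smul_def]
  | r5 => rw [map_pow, Fmap_al, map_zero, b5]
  | r6 =>
    rw [map_pow, Fmap_et, map_zero]
    have hE2 : pi K t 1 d (et K) + c • (pi K t 1 d (et K) * pi K t 1 d (et K))
        = aeval (pi K t 1 d (et K)) ((X : K[X]) + C c * X ^ 2) := by
      rw [aeval_lin, pow_two]
    rw [hE2, ← map_pow (aeval (pi K t 1 d (et K)))]
    obtain ⟨u, hu⟩ := poly4 c (t + 1)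
    rw [hu, map_mul, map_pow, aeval_X, b6, zero_mul]
  | r7 =>
    simp only [map_mul, Fmap_ga, Fmap_al, map_zero, add_mul, smul_mul_assoc]
    have h1 : (pi K t 1 d (ga K) * pi K t 1 d (al K))
        * (pi K t 1 d (al K) * pi K t 1 d (al K)) = 0 := by
      rw [← mul_assoc, mul_assoc (pi K t 1 d (ga K)), b7, zero_mul]
    rw [b7, h1, smul_zero, zero_add]
  | r8 => rw [map_mul, map_mul, Fmap_al, Fmap_be, map_zero, b8]

/-- The induced hom `Q(e) → Q(d)` for `e = d + c`. -/
noncomputable def Phi (hchar : CharP K 2) {t : ℕ} (ht : 4 ≤ t) (hev : Even t)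
    (c d e : K) (he : e = d + c) :
    RingQuot (QBRel K t 1 e) →ₐ[K] RingQuot (QBRel K t 1 d) :=
  RingQuot.liftAlgHom K ⟨Fmap K t d c, rel_pres hchar ht hev c d e he⟩

lemma Phi_pi (hchar : CharP K 2) {t : ℕ} (ht : 4 ≤ t) (hev : Even t)
    (c d e : K) (he : e = d + c) (x : FreeAlgebra K (Fin 6)) :
    Phi hchar ht hev c d e he (pi K t 1 e x) = Fmap K t d c x :=
  RingQuot.liftAlgHom_mkAlgHom_apply K _ _ x

end SocleWSA8Aux

namespace SocleWSA8Aux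
open SocleWSA8 Polynomial

variable {K : Type} [Field K]

lemma tau_e1 (hchar : CharP K 2) {t : ℕ} (ht : 4 ≤ t) (hev : Even t)
    (c d e : K) (he : e = d + c) (he' : d = e + c) :
    Phi hchar ht hev c e d he' (Phi hchar ht hev c d e he (pi K t 1 e (e1 K)))
      = pi K t 1 e (e1 K) := by
  rw [Phi_pi, Fmap_e1, Phi_pi, Fmap_e1]

lemma tau_e2 (hchar : CharP K 2) {t : ℕ} (ht : 4 ≤ t) (hev : Even t)
    (c d e : K) (he : e = d + c) (he' : d = e + c) :
    Phi hchar ht hev c e d he' (Phi hchar ht hev c d e he (pi K t 1 e (e2 K)))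
      = pi K t 1 e (e2 K) := by
  rw [Phi_pi, Fmap_e2, Phi_pi, Fmap_e2]

lemma tau_al (hchar : CharP K 2) {t : ℕ} (ht : 4 ≤ t) (hev : Even t)
    (c d e : K) (he : e = d + c) (he' : d = e + c) :
    Phi hchar ht hev c e d he' (Phi hchar ht hev c d e he (pi K t 1 e (al K)))
      = pi K t 1 e (al K) := by
  rw [Phi_pi, Fmap_al, Phi_pi, Fmap_al]

lemma tau_be (hchar : CharP K 2) {t : ℕ} (ht : 4 ≤ t) (hev : Even t)
    (c d e : K) (he : e = d + c) (he' : d = e + c) :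
    Phi hchar ht hev c e d he' (Phi hchar ht hev c d e he (pi K t 1 e (be K)))
      = pi K t 1 e (be K) := by
  rw [Phi_pi, Fmap_be, Phi_pi, Fmap_be]

lemma tau_ga (hchar : CharP K 2) {t : ℕ} (ht : 4 ≤ t) (hev : Even t)
    (c d e : K) (he : e = d + c) (he' : d = e + c) :
    Phi hchar ht hev c e d he' (Phi hchar ht hev c d e he (pi K t 1 e (ga K)))
      = pi K t 1 e (ga K) := by
  simp only [Phi_pi, Fmap_ga, Fmap_al, map_add, map_smul, map_mul]
  rw [add_mul, smul_mul_assoc, mul_assoc, b7 t e, smul_zero, add_zero, add_assoc,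
    dQ2 t e hchar, add_zero]

lemma tau_et (hchar : CharP K 2) {t : ℕ} (ht : 4 ≤ t) (hev : Even t)
    (c d e : K) (he : e = d + c) (he' : d = e + c) :
    Phi hchar ht hev c e d he' (Phi hchar ht hev c d e he (pi K t 1 e (et K)))
      = pi K t 1 e (et K) + (c * c * c) • pi K t 1 e (et K) ^ 4 := by
  simp only [Phi_pi, Fmap_et, map_add, map_smul, map_mul]
  have h := step_id (R := RingQuot (QBRel K t 1 e)) hchar (pi K t 1 e (et K)) c 1
  rw [show (2 : ℕ) ^ 1 = 2 from rfl, show (1 : ℕ) + 1 = 2 from rfl,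
    show (2 : ℕ) ^ 2 = 4 from rfl] at h
  simp only [pow_two] at h
  exact h

lemma pow_fix {Q : Type} [Semiring Q] [Algebra K Q] (σ : Q →ₐ[K] Q) {g : Q} (h : σ g = g) :
    ∀ n, (σ ^ n) g = g := by
  intro n
  induction n with
  | zero => simp
  | succ n ih => rw [pow_succ, AlgHom.mul_apply, h, ih]

lemma theta_pow {Q : Type} [Ring Q] [Algebra K Q] (hchar : CharP K 2) {t : ℕ}
    (σ : Q →ₐ[K] Q) (x : Q) (c0 : K) (hx : σ x = x + c0 • x ^ 4)
    (hnil : x ^ (t + 1) = 0) :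
    (σ ^ 2 ^ t) x = x := by
  have key : ∀ n, ∃ (c' : K) (s : ℕ), n + 2 ≤ s ∧ (σ ^ 2 ^ n) x = x + c' • x ^ 2 ^ s := by
    intro n
    induction n with
    | zero =>
      refine ⟨c0, 2, le_rfl, ?_⟩
      rw [show (2 : ℕ) ^ 0 = 1 from rfl, pow_one, hx, show (2 : ℕ) ^ 2 = 4 from rfl]
    | succ n ih =>
      obtain ⟨c', s, hs, hval⟩ := ih
      refine ⟨c' ^ 2 ^ s * c', s + s, by omega, ?_⟩
      rw [show (2 : ℕ) ^ (n + 1) = 2 ^ n + 2 ^ n from by rw [pow_succ]; omega,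
        pow_add, AlgHom.mul_apply, hval, map_add, map_smul, map_pow, hval]
      exact step_id hchar x c' s
  obtain ⟨c', s, hs, hval⟩ := key t
  have hle : t + 1 ≤ 2 ^ s := by
    have := Nat.lt_two_pow_self (n := s)
    omega
  have hz : x ^ 2 ^ s = 0 := by
    rw [show 2 ^ s = (t + 1) + (2 ^ s - (t + 1)) from by omega, pow_add, hnil, zero_mul]
  rw [hval, hz, smul_zero, add_zero]

lemma tau_pow_one (hchar : CharP K 2) {t : ℕ} (ht : 4 ≤ t) (hev : Even t)
    (c d e : K) (he : e = d + c) (he' : d = e + c) :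
    ((Phi hchar ht hev c e d he').comp (Phi hchar ht hev c d e he)) ^ 2 ^ t = 1 := by
  apply RingQuot.ringQuot_ext'
  apply FreeAlgebra.hom_ext
  funext i
  simp only [Function.comp_apply, AlgHom.coe_comp, AlgHom.one_apply]
  fin_cases i
  · exact pow_fix _ (tau_e1 hchar ht hev c d e he he') _
  · exact pow_fix _ (tau_e2 hchar ht hev c d e he he') _
  · exact pow_fix _ (tau_al hchar ht hev c d e he he') _
  · exact pow_fix _ (tau_be hchar ht hev c d e he he') _
  · exact pow_fix _ (tau_ga hchar ht hev c d e he he') _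
  · exact theta_pow hchar _ _ _ (tau_et hchar ht hev c d e he he') (b6 t e)

open SocleWSA8 in
theorem main (K : Type) [Field K] (hchar : CharP K 2)
    (t : ℕ) (ht : 4 ≤ t) (hev : Even t) (b : K) :
    ∃ h : RingQuot (QBRel K t 1 b) ≃ₐ[K] RingQuot (QBRel K t 1 0),
      h (pi K t 1 b (al K)) = pi K t 1 0 (al K) ∧
      h (pi K t 1 b (be K)) = pi K t 1 0 (be K) ∧
      h (pi K t 1 b (ga K)) = pi K t 1 0 (ga K) + b • pi K t 1 0 (ga K * al K) ∧
      h (pi K t 1 b (et K)) = pi K t 1 0 (et K) + b • pi K t 1 0 (et K * et K) := by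
  haveI := hchar
  have he1 : b = 0 + b := (zero_add b).symm
  have he2 : (0 : K) = b + b := by rw [← two_mul, two_K hchar, zero_mul]
  let φ : RingQuot (QBRel K t 1 b) →ₐ[K] RingQuot (QBRel K t 1 0) :=
    Phi hchar ht hev b 0 b he1
  let ψ₀ : RingQuot (QBRel K t 1 0) →ₐ[K] RingQuot (QBRel K t 1 b) :=
    Phi hchar ht hev b b 0 he2
  have hτN : (ψ₀.comp φ) ^ 2 ^ t = 1 := tau_pow_one hchar ht hev b 0 b he1 he2
  have hτ'N : (φ.comp ψ₀) ^ 2 ^ t = 1 := tau_pow_one hchar ht hev b b 0 he2 he1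
  have hN1 : 2 ^ t - 1 + 1 = 2 ^ t := by
    have : (1 : ℕ) ≤ 2 ^ t := Nat.one_le_two_pow
    omega
  have hcross : ∀ k x, ((φ.comp ψ₀) ^ k) (φ x) = φ (((ψ₀.comp φ) ^ k) x) := by
    intro k
    induction k with
    | zero => intro x; simp
    | succ k ih =>
      intro x
      rw [pow_succ, pow_succ, AlgHom.mul_apply, AlgHom.mul_apply]
      have hst : (φ.comp ψ₀) (φ x) = φ ((ψ₀.comp φ) x) := rfl
      rw [hst, ih]
  refine ⟨AlgEquiv.ofAlgHom φ (ψ₀.comp ((φ.comp ψ₀) ^ (2 ^ t - 1))) ?_ ?_, ?_, ?_, ?_, ?_⟩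
  · apply AlgHom.ext; intro x
    show φ (ψ₀ (((φ.comp ψ₀) ^ (2 ^ t - 1)) x)) = x
    have h1 : φ (ψ₀ (((φ.comp ψ₀) ^ (2 ^ t - 1)) x))
        = ((φ.comp ψ₀) * (φ.comp ψ₀) ^ (2 ^ t - 1)) x := rfl
    rw [h1, ← pow_succ', hN1, hτ'N, AlgHom.one_apply]
  · apply AlgHom.ext; intro x
    show ψ₀ (((φ.comp ψ₀) ^ (2 ^ t - 1)) (φ x)) = x
    rw [hcross]
    have h1 : ψ₀ (φ (((ψ₀.comp φ) ^ (2 ^ t - 1)) x))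
        = ((ψ₀.comp φ) * (ψ₀.comp φ) ^ (2 ^ t - 1)) x := rfl
    rw [h1, ← pow_succ', hN1, hτN, AlgHom.one_apply]
  · show φ (pi K t 1 b (al K)) = pi K t 1 0 (al K)
    rw [Phi_pi, Fmap_al]
  · show φ (pi K t 1 b (be K)) = pi K t 1 0 (be K)
    rw [Phi_pi, Fmap_be]
  · show φ (pi K t 1 b (ga K)) = pi K t 1 0 (ga K) + b • pi K t 1 0 (ga K * al K)
    rw [Phi_pi, Fmap_ga, map_mul]
  · show φ (pi K t 1 b (et K)) = pi K t 1 0 (et K) + b • pi K t 1 0 (et K * et K)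
    rw [Phi_pi, Fmap_et, map_mul]

end SocleWSA8Aux


open SocleWSA8 in
/-- Let `K` be a field of characteristic 2, `t ≥ 4` even,
`b ∈ K`.  Then `α ↦ α`, `β ↦ β`, `γ ↦ γ + bγα`, `η ↦ η + bη²` induces a
`K`-algebra isomorphism `Q(2B)_3^t(b) → Q(2B)_3^t(0)`. -/
theorem socle_wsa_stmt8 (K : Type) [Field K] (hchar : CharP K 2)
    (t : ℕ) (ht : 4 ≤ t) (hev : Even t) (b : K) :
    ∃ h : RingQuot (QBRel K t 1 b) ≃ₐ[K] RingQuot (QBRel K t 1 0),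
      h (pi K t 1 b (al K)) = pi K t 1 0 (al K) ∧
      h (pi K t 1 b (be K)) = pi K t 1 0 (be K) ∧
      h (pi K t 1 b (ga K)) = pi K t 1 0 (ga K) + b • pi K t 1 0 (ga K * al K) ∧
      h (pi K t 1 b (et K)) = pi K t 1 0 (et K) + b • pi K t 1 0 (et K * et K) :=
  SocleWSA8Aux.main K hchar t ht hev b
end

section
/- Let K be a field of characteristic 2 and k ≥ 2. If a_0, b_0, c_0 ∈ K* satisfy a_0^k b_0^{k−1} c_0^k = b_0 c_0² and a_0^{k−1}(b_0 c_0)^k = a_0², then a_0³ = (b_0 c_0)² and a_0^{5k−6} = 1. -/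
/-- Let `K` be a field of characteristic 2 and `k ≥ 2`.
If `a₀, b₀, c₀ ∈ K*` satisfy `a₀^k b₀^{k−1} c₀^k = b₀ c₀²` and
`a₀^{k−1} (b₀c₀)^k = a₀²`, then `a₀³ = (b₀c₀)²` and `a₀^{5k−6} = 1`. -/
theorem socle_wsa_stmt16 (K : Type) [Field K] (hchar : CharP K 2)
    (k : ℕ) (hk : 2 ≤ k) (a0 b0 c0 : K)
    (ha : a0 ≠ 0) (hb : b0 ≠ 0) (hc : c0 ≠ 0)
    (h1 : a0 ^ k * b0 ^ (k - 1) * c0 ^ k = b0 * c0 ^ 2)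
    (h2 : a0 ^ (k - 1) * (b0 * c0) ^ k = a0 ^ 2) :
    a0 ^ 3 = (b0 * c0) ^ 2 ∧ a0 ^ (5 * k - 6) = 1 := by
  obtain ⟨m, rfl⟩ : ∃ m, k = m + 2 := ⟨k - 2, (Nat.sub_add_cancel hk).symm⟩
  simp only [show m + 2 - 1 = m + 1 from rfl] at h1 h2
  have hbc2 : b0 * c0 ^ 2 ≠ 0 := by
    exact mul_ne_zero hb (pow_ne_zero _ hc)
  have e1 : a0 ^ (m + 2) * (b0 * c0) ^ m = 1 := by
    have : a0 ^ (m + 2) * (b0 * c0) ^ m * (b0 * c0 ^ 2) = 1 * (b0 * c0 ^ 2) := by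
      rw [one_mul]
      calc a0 ^ (m + 2) * (b0 * c0) ^ m * (b0 * c0 ^ 2)
          = a0 ^ (m + 2) * b0 ^ (m + 1) * c0 ^ (m + 2) := by rw [mul_pow]; ring
        _ = b0 * c0 ^ 2 := h1
    exact mul_right_cancel₀ hbc2 this
  have e2 : a0 ^ 3 = (b0 * c0) ^ 2 := by
    have h2' : a0 ^ (m + 2) * (b0 * c0) ^ (m + 2) = a0 ^ 3 := by
      calc a0 ^ (m + 2) * (b0 * c0) ^ (m + 2)
          = (a0 ^ (m + 1) * (b0 * c0) ^ (m + 2)) * a0 := by ring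
        _ = a0 ^ 2 * a0 := by rw [h2]
        _ = a0 ^ 3 := by ring
    calc a0 ^ 3 = a0 ^ (m + 2) * (b0 * c0) ^ (m + 2) := h2'.symm
      _ = (a0 ^ (m + 2) * (b0 * c0) ^ m) * (b0 * c0) ^ 2 := by ring
      _ = (b0 * c0) ^ 2 := by rw [e1, one_mul]
  refine ⟨e2, ?_⟩
  have : 5 * (m + 2) - 6 = 5 * m + 4 := by omega
  rw [this]
  calc a0 ^ (5 * m + 4) = a0 ^ (2 * m + 4) * (a0 ^ 3) ^ m := by ring
    _ = a0 ^ (2 * m + 4) * ((b0 * c0) ^ 2) ^ m := by rw [e2]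
    _ = (a0 ^ (m + 2) * (b0 * c0) ^ m) ^ 2 := by ring
    _ = 1 := by rw [e1, one_pow]
end

section
/- Let K be a field of characteristic 2, k ≥ 2, and let a_0 ∈ K* and sequences (a_j)_{j≥0} in K satisfy, for all m = 0, ..., k−2: Σ_{i+j=m} a_{4i} a_{4j+3} + Σ_{i+j=m} a_{4i+2} a_{4j} = 0. Then a_{4i+2} + a_{4i+3} = 0 for all i = 0, ..., k−2. -/
open Finset in
/-- Let `K` be a field of characteristic 2, `k ≥ 2`, and
`(a_j)` a sequence in `K` with `a 0 ≠ 0` satisfying, for all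
`m = 0, …, k−2`:
`Σ_{i+j=m} a_{4i} a_{4j+3} + Σ_{i+j=m} a_{4i+2} a_{4j} = 0`.
Then `a_{4i+2} + a_{4i+3} = 0` for all `i = 0, …, k−2`. -/
theorem socle_wsa_stmt18 (K : Type) [Field K] (hchar : CharP K 2)
    (k : ℕ) (hk : 2 ≤ k) (a : ℕ → K) (ha : a 0 ≠ 0)
    (h : ∀ m ≤ k - 2,
      (∑ i ∈ range (m + 1), a (4 * i) * a (4 * (m - i) + 3))
        + (∑ i ∈ range (m + 1), a (4 * i + 2) * a (4 * (m - i))) = 0) :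
    ∀ i ≤ k - 2, a (4 * i + 2) + a (4 * i + 3) = 0 := by
  intro i
  induction i using Nat.strong_induction_on with
  | _ m ih =>
    intro hm
    have hh := h m hm
    -- reflect the second sum
    have hrefl : (∑ i ∈ range (m + 1), a (4 * i + 2) * a (4 * (m - i)))
        = ∑ i ∈ range (m + 1), a (4 * i) * a (4 * (m - i) + 2) := by
      rw [← Finset.sum_range_reflect]
      apply Finset.sum_congr rfl
      intro j hj
      simp only [Finset.mem_range] at hj
      have hj' : j ≤ m := Nat.lt_succ_iff.mp hj
      have h1 : m + 1 - 1 - j = m - j := by omega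
      have h2 : m - (m - j) = j := by omega
      rw [h1, h2, mul_comm]
    rw [hrefl, ← Finset.sum_add_distrib] at hh
    have hcomb : (∑ i ∈ range (m + 1),
        (a (4 * i) * a (4 * (m - i) + 3) + a (4 * i) * a (4 * (m - i) + 2)))
        = ∑ i ∈ range (m + 1), a (4 * i) * (a (4 * (m - i) + 2) + a (4 * (m - i) + 3)) := by
      apply Finset.sum_congr rfl
      intro j _
      ring
    rw [hcomb] at hh
    have hsingle : (∑ i ∈ range (m + 1),
        a (4 * i) * (a (4 * (m - i) + 2) + a (4 * (m - i) + 3)))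
        = a 0 * (a (4 * m + 2) + a (4 * m + 3)) := by
      rw [Finset.sum_eq_single_of_mem 0 (by simp)]
      · simp
      · intro j hj hj0
        simp only [Finset.mem_range] at hj
        have hlt : m - j < m := by omega
        have hle : m - j ≤ k - 2 := by omega
        rw [ih (m - j) hlt hle, mul_zero]
    rw [hsingle] at hh
    exact (mul_eq_zero.mp hh).resolve_left ha
end

section
/- Let K be a field of characteristic 2, k ≥ 2, and let c_0 ∈ K* and sequences (b_j), (c_j) in K satisfy, for all m = 0, ..., k−2: Σ_{i+j+l=m} c_{2i} b_{2j+1} c_{2l} + Σ_{i+j+l=m} c_{2i+1} b_{2j} c_{2l} = 0 (sums over triples i, j, l ≥ 0 with i+j+l = m). Then for all m = 0, ..., k−2: Σ_{i+j=m} c_{2i} b_{2j+1} + Σ_{i+j=m} c_{2i+1} b_{2j} = 0. -/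
open Finset

lemma tri_reindex {K : Type} [AddCommMonoid K] (f : ℕ → ℕ → ℕ → K) (m : ℕ) :
    (∑ i ∈ range (m + 1), ∑ j ∈ range (m - i + 1), f i j (m - i - j))
      = ∑ n ∈ range (m + 1), ∑ i ∈ range (n + 1), f i (n - i) (m - n) := by
  rw [Finset.sum_sigma', Finset.sum_sigma']
  refine Finset.sum_nbij' (fun p : Σ _ : ℕ, ℕ => (⟨p.1 + p.2, p.1⟩ : Σ _ : ℕ, ℕ))
    (fun p : Σ _ : ℕ, ℕ => (⟨p.2, p.1 - p.2⟩ : Σ _ : ℕ, ℕ)) ?_ ?_ ?_ ?_ ?_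
  · rintro ⟨i, j⟩ hij
    simp only [mem_sigma, mem_range] at hij ⊢
    omega
  · rintro ⟨n, i⟩ hni
    simp only [mem_sigma, mem_range] at hni ⊢
    omega
  · rintro ⟨i, j⟩ hij
    dsimp only
    rw [add_tsub_cancel_left]
  · rintro ⟨n, i⟩ hni
    simp only [mem_sigma, mem_range] at hni
    dsimp only
    rw [Nat.add_sub_cancel' (by omega : i ≤ n)]
  · rintro ⟨i, j⟩ hij
    show f i j (m - i - j) = f i (i + j - i) (m - (i + j))
    rw [add_tsub_cancel_left, Nat.sub_sub]


open Finset in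
/-- Let `K` be a field of characteristic 2, `k ≥ 2`, and
`c 0 ≠ 0`, with sequences `(b_j), (c_j)` in `K` satisfying, for all
`m = 0, …, k−2`:
`Σ_{i+j+l=m} c_{2i} b_{2j+1} c_{2l} + Σ_{i+j+l=m} c_{2i+1} b_{2j} c_{2l} = 0`.
Then for all `m = 0, …, k−2`:
`Σ_{i+j=m} c_{2i} b_{2j+1} + Σ_{i+j=m} c_{2i+1} b_{2j} = 0`. -/
theorem socle_wsa_stmt19 (K : Type) [Field K] (hchar : CharP K 2)
    (k : ℕ) (hk : 2 ≤ k) (b c : ℕ → K) (hc : c 0 ≠ 0)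
    (h : ∀ m ≤ k - 2,
      (∑ i ∈ range (m + 1), ∑ j ∈ range (m - i + 1),
          c (2 * i) * b (2 * j + 1) * c (2 * (m - i - j)))
        + (∑ i ∈ range (m + 1), ∑ j ∈ range (m - i + 1),
          c (2 * i + 1) * b (2 * j) * c (2 * (m - i - j))) = 0) :
    ∀ m ≤ k - 2,
      (∑ i ∈ range (m + 1), c (2 * i) * b (2 * (m - i) + 1))
        + (∑ i ∈ range (m + 1), c (2 * i + 1) * b (2 * (m - i))) = 0 := by
  set S : ℕ → K := fun n =>
    (∑ i ∈ range (n + 1), c (2 * i) * b (2 * (n - i) + 1))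
      + (∑ i ∈ range (n + 1), c (2 * i + 1) * b (2 * (n - i))) with hS
  have key : ∀ m, (∑ i ∈ range (m + 1), ∑ j ∈ range (m - i + 1),
          c (2 * i) * b (2 * j + 1) * c (2 * (m - i - j)))
        + (∑ i ∈ range (m + 1), ∑ j ∈ range (m - i + 1),
          c (2 * i + 1) * b (2 * j) * c (2 * (m - i - j)))
      = ∑ n ∈ range (m + 1), S n * c (2 * (m - n)) := by
    intro m
    rw [tri_reindex (fun i j l => c (2 * i) * b (2 * j + 1) * c (2 * l)) m,
      tri_reindex (fun i j l => c (2 * i + 1) * b (2 * j) * c (2 * l)) m,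
      ← Finset.sum_add_distrib]
    refine Finset.sum_congr rfl fun n _ => ?_
    rw [hS]
    dsimp only
    rw [add_mul, Finset.sum_mul, Finset.sum_mul]
  intro m hm
  induction m using Nat.strong_induction_on with
  | _ m ih =>
    have h0 := h m hm
    rw [key m, Finset.sum_range_succ] at h0
    have hz : ∀ n ∈ range m, S n * c (2 * (m - n)) = 0 := by
      intro n hn
      have h1 := ih n (mem_range.mp hn) (le_trans (le_of_lt (mem_range.mp hn)) hm)
      rw [hS]; dsimp only; rw [h1, zero_mul]
    rw [Finset.sum_eq_zero hz, zero_add, Nat.sub_self, Nat.mul_zero] at h0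
    have : S m = 0 := (mul_eq_zero.mp h0).resolve_right hc
    rw [hS] at this; dsimp only at this; exact this
end
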